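/- Let $E, F$ be vector spaces with order units, $\mathcal{H}$ an equicontinuous family of weakly additive, order-preserving operators $T\colon E \to F$, and $A$ a bounded subset of $E$. Then there exists a bounded subset $B \subseteq F$ with $T(A) \subseteq B$ for all $T \in \mathcal{H}$ (i.e., $\bigcup_{T \in \mathcal{H}} T(A)$ is bounded in $F$). -/

import Mathlib

/-- The order norm `‖x‖ = inf {c > 0 : -c•e ≤ x ≤ c•e}` of a space with order unit `e`. -/
noncomputable def ordNorm {L : Type*} [AddCommGroup L] [PartialOrder L] [Module ℝ L]
    (e x : L) : ℝ :=
  sInf {c : ℝ | 0 < c ∧ -(c • e) ≤ x ∧ x ≤ c • e}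

/-- `e` is an order unit: every element is bounded by a multiple of `e`. -/
def IsOrderUnit {L : Type*} [AddCommGroup L] [PartialOrder L] [Module ℝ L] (e : L) : Prop :=
  ∀ x : L, ∃ l : ℝ, 0 < l ∧ -(l • e) ≤ x ∧ x ≤ l • e

/-- The space is Archimedean with respect to the order unit `e`. -/
def IsArch {L : Type*} [AddCommGroup L] [PartialOrder L] [Module ℝ L] (e : L) : Prop :=
  ∀ x : L, (∀ n : ℕ, 0 < n → (n : ℝ) • x ≤ e) → x ≤ 0

/-- An operator `T` is weakly additive with respect to the order unit `e`. -/
def WAddOp {L M : Type*} [AddCommGroup L] [Module ℝ L] [AddCommGroup M] [Module ℝ M]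
    (e : L) (T : L → M) : Prop :=
  ∀ x : L, ∀ l : ℝ, T (x + l • e) = T x + l • T e

lemma ordNorm_le' {L : Type*} [AddCommGroup L] [PartialOrder L] [IsOrderedAddMonoid L] [Module ℝ L]
    (e x : L) {c : ℝ} (hc : 0 < c) (h1 : -(c • e) ≤ x) (h2 : x ≤ c • e) :
    ordNorm e x ≤ c :=
  csInf_le ⟨0, fun y hy => le_of_lt hy.1⟩ ⟨hc, h1, h2⟩

lemma ordNorm_lt_elim {L : Type*} [AddCommGroup L] [PartialOrder L] [IsOrderedAddMonoid L] [Module ℝ L]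
    {e : L} (hu : IsOrderUnit e) {x : L} {r : ℝ} (h : ordNorm e x < r) :
    ∃ c : ℝ, 0 < c ∧ c < r ∧ -(c • e) ≤ x ∧ x ≤ c • e := by
  obtain ⟨l, hl⟩ := hu x
  obtain ⟨c, hc, hcr⟩ := exists_lt_of_csInf_lt ⟨l, hl⟩ h
  exact ⟨c, hc.1, hcr, hc.2.1, hc.2.2⟩

lemma orderUnit_nonneg {L : Type*} [AddCommGroup L] [PartialOrder L] [IsOrderedAddMonoid L] [Module ℝ L]
    [PosSMulStrictMono ℝ L] [PosSMulReflectLT ℝ L]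
    {e : L} (hu : IsOrderUnit e) : 0 ≤ e := by
  obtain ⟨l, hl, _, h2⟩ := hu 0
  have := smul_le_smul_of_nonneg_left h2 (le_of_lt (inv_pos.mpr hl))
  rwa [smul_zero, smul_smul, inv_mul_cancel₀ (ne_of_gt hl), one_smul] at this

theorem stmt12 {E F : Type*}
    [AddCommGroup E] [PartialOrder E] [IsOrderedAddMonoid E] [Module ℝ E]
    [PosSMulStrictMono ℝ E] [PosSMulReflectLT ℝ E]
    [AddCommGroup F] [PartialOrder F] [IsOrderedAddMonoid F] [Module ℝ F]
    [PosSMulStrictMono ℝ F] [PosSMulReflectLT ℝ F]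
    (eE : E) (eF : F) (huE : IsOrderUnit eE) (haE : IsArch eE)
    (huF : IsOrderUnit eF) (haF : IsArch eF)
    (H : Set (E → F)) (hH : ∀ T ∈ H, WAddOp eE T ∧ Monotone T)
    (hequi : ∀ ε : ℝ, 0 < ε → ∃ δ : ℝ, 0 < δ ∧
      ∀ T ∈ H, ∀ x : E, ordNorm eE x < δ → ordNorm eF (T x) < ε)
    (A : Set E) (hA : ∃ R : ℝ, ∀ x ∈ A, ordNorm eE x ≤ R) :
    ∃ M : ℝ, ∀ T ∈ H, ∀ x ∈ A, ordNorm eF (T x) ≤ M := by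
  obtain ⟨δ, hδ, hd⟩ := hequi 1 one_pos
  obtain ⟨R, hR⟩ := hA
  have heE : (0 : E) ≤ eE := orderUnit_nonneg huE
  have heF : (0 : F) ≤ eF := orderUnit_nonneg huF
  set R' : ℝ := max R 0 + 1 with hR'def
  have hR'pos : 0 < R' := by positivity
  set M : ℝ := 1 + 4 * R' / δ with hMdef
  have hMpos : 0 < M := by positivity
  refine ⟨M, fun T hT x hx => ?_⟩
  obtain ⟨hwa, hmono⟩ := hH T hT
  -- uniform bound from equicontinuity
  have bd : ∀ y : E, ordNorm eE y < δ → -eF ≤ T y ∧ T y ≤ eF := by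
    intro y hy
    obtain ⟨c, hc, hc1, h1, h2⟩ := ordNorm_lt_elim huF (hd T hT y hy)
    have hce : c • eF ≤ (1 : ℝ) • eF := smul_le_smul_of_nonneg_right (le_of_lt hc1) heF
    rw [one_smul] at hce
    exact ⟨le_trans (neg_le_neg hce) h1, le_trans h2 hce⟩
  -- bound on T 0
  have h0 : ordNorm eE (0 : E) < δ := by
    have h1 : (0 : E) ≤ (δ / 2) • eE := smul_nonneg (by positivity) heE
    have : ordNorm eE (0 : E) ≤ δ / 2 :=
      ordNorm_le' eE 0 (by positivity) (neg_nonpos_of_nonneg h1) h1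
    linarith
  have hT0 := bd 0 h0
  -- bound on T ((δ/2) • eE)
  have hhalf : ordNorm eE ((δ / 2) • eE) < δ := by
    have hnn : (0 : E) ≤ (δ / 2) • eE := smul_nonneg (by positivity) heE
    have := ordNorm_le' eE ((δ / 2) • eE) (by positivity) (neg_le_self hnn) (le_refl _)
    linarith
  have hTh := bd _ hhalf
  have hTh' : T ((δ / 2) • eE) = T 0 + (δ / 2) • T eE := by
    have := hwa 0 (δ / 2); rwa [zero_add] at this
  rw [hTh'] at hTh
  -- bounds on T eE in terms of eF
  have hupper : (δ / 2) • T eE ≤ (2 : ℝ) • eF := by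
    calc (δ / 2) • T eE = (T 0 + (δ / 2) • T eE) - T 0 := by abel
      _ ≤ eF - (-eF) := sub_le_sub hTh.2 hT0.1
      _ = (2 : ℝ) • eF := by rw [two_smul]; abel
  have hlower : -((2 : ℝ) • eF) ≤ (δ / 2) • T eE := by
    calc -((2 : ℝ) • eF) = -eF - eF := by rw [two_smul]; abel
      _ ≤ (T 0 + (δ / 2) • T eE) - T 0 := sub_le_sub hTh.1 hT0.2
      _ = (δ / 2) • T eE := by abel
  have e1 : (2 / δ) * (δ / 2) = 1 := by field_simp
  have e2 : (2 / δ) * 2 = 4 / δ := by field_simp; ring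
  have hTeE_up : T eE ≤ (4 / δ) • eF := by
    have h := smul_le_smul_of_nonneg_left hupper (by positivity : (0:ℝ) ≤ 2 / δ)
    rwa [smul_smul, smul_smul, e1, e2, one_smul] at h
  have hTeE_lo : -((4 / δ) • eF) ≤ T eE := by
    have h := smul_le_smul_of_nonneg_left hlower (by positivity : (0:ℝ) ≤ 2 / δ)
    rwa [smul_neg, smul_smul, smul_smul, e1, e2, one_smul] at h
  -- bound on x
  have hxR' : ordNorm eE x < R' := by
    have := hR x hx
    have : ordNorm eE x ≤ max R 0 := le_trans this (le_max_left _ _)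
    linarith
  obtain ⟨c, hc, hcR, hx1, hx2⟩ := ordNorm_lt_elim huE hxR'
  have hTc : T (c • eE) = T 0 + c • T eE := by
    have := hwa 0 c; rwa [zero_add] at this
  have hTnc : T (-(c • eE)) = T 0 + -(c • T eE) := by
    have := hwa 0 (-c)
    rw [zero_add, neg_smul, neg_smul] at this
    exact this
  have hcTeE : c • T eE ≤ c • ((4 / δ) • eF) :=
    smul_le_smul_of_nonneg_left hTeE_up hc.le
  have hcoef : eF + c • ((4 / δ) • eF) ≤ M • eF := by
    rw [smul_smul]
    have hsc : 1 + c * (4 / δ) ≤ M := by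
      have h1 : c * (4 / δ) ≤ R' * (4 / δ) :=
        mul_le_mul_of_nonneg_right hcR.le (by positivity)
      have h2 : R' * (4 / δ) = 4 * R' / δ := by ring
      rw [hMdef]; linarith [h1, h2 ▸ h1]
    calc eF + (c * (4 / δ)) • eF = (1 + c * (4 / δ)) • eF := by
          rw [add_smul, one_smul]
      _ ≤ M • eF := smul_le_smul_of_nonneg_right hsc heF
  -- upper bound on T x
  have hup : T x ≤ M • eF := by
    calc T x ≤ T (c • eE) := hmono hx2
      _ = T 0 + c • T eE := hTc
      _ ≤ eF + c • ((4 / δ) • eF) := add_le_add hT0.2 hcTeE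
      _ ≤ M • eF := hcoef
  -- lower bound on T x
  have hlo : -(M • eF) ≤ T x := by
    calc -(M • eF) ≤ -(eF + c • ((4 / δ) • eF)) := neg_le_neg hcoef
      _ = -eF - c • ((4 / δ) • eF) := by abel
      _ ≤ T 0 - c • T eE := sub_le_sub hT0.1 hcTeE
      _ = T 0 + -(c • T eE) := by abel
      _ = T (-(c • eE)) := hTnc.symm
      _ ≤ T x := hmono hx1
  exact ordNorm_le' eF (T x) hMpos hlo hup
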